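/- Let A and B be Hermitian n×n complex matrices and let p, q ∈ (1, ∞) with 1/p + 1/q = 1. Then the trace tr(AB) is a real number and satisfies tr(AB) ≤ (Σ_{k=1}^n |λ_k(A)|^p)^{1/p} · (Σ_{k=1}^n |λ_k(B)|^q)^{1/q}, where λ_1(M), …, λ_n(M) denote the (real) eigenvalues of a Hermitian matrix M listed with multiplicity. -/

import Mathlib

noncomputable section

open Matrix Finset

/-- matrix Hölder inequality.  For Hermitian `A, B` and conjugate exponents
`p, q ∈ (1, ∞)`, the trace `tr(AB)` is real and bounded by
`(∑ |λ_k(A)|^p)^{1/p} (∑ |λ_k(B)|^q)^{1/q}`. -/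
theorem matrix_holder_inequality
    (n : ℕ) (hn : 1 ≤ n) (A B : Matrix (Fin n) (Fin n) ℂ)
    (hA : A.IsHermitian) (hB : B.IsHermitian)
    (p q : ℝ) (hp : 1 < p) (hq : 1 < q) (hpq : 1 / p + 1 / q = 1) :
    (Matrix.trace (A * B)).im = 0 ∧
    (Matrix.trace (A * B)).re ≤
      (∑ k, |hA.eigenvalues k| ^ p) ^ (1 / p) * (∑ k, |hB.eigenvalues k| ^ q) ^ (1 / q) := by
  classical
  have hpq' : Real.HolderConjugate p q := Real.holderConjugate_iff.mpr ⟨hp, by rw [← one_div, ← one_div]; exact hpq⟩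
  set U : Matrix.unitaryGroup (Fin n) ℂ := hA.eigenvectorUnitary with hU
  set V : Matrix.unitaryGroup (Fin n) ℂ := hB.eigenvectorUnitary with hV
  set W : Matrix.unitaryGroup (Fin n) ℂ := star U * V with hWdef
  set a : Fin n → ℝ := hA.eigenvalues with ha
  set b : Fin n → ℝ := hB.eigenvalues with hb
  set Wc : Matrix (Fin n) (Fin n) ℂ := (W : Matrix (Fin n) (Fin n) ℂ) with hWc
  set s : Fin n → Fin n → ℝ := fun i j => Complex.normSq (Wc i j) with hs
  have hs0 : ∀ i j, 0 ≤ s i j := fun i j => Complex.normSq_nonneg _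
  -- row and column sums of s are 1
  have hrow : ∀ i, ∑ j, s i j = 1 := by
    intro i
    have h1 : Wc * star Wc = 1 := Matrix.mem_unitaryGroup_iff.mp W.2
    have h2 := congrFun (congrFun h1 i) i
    simp only [Matrix.mul_apply, Matrix.star_apply, Matrix.one_apply_eq] at h2
    have h3 : (((∑ j, s i j : ℝ)) : ℂ) = 1 := by
      rw [← h2]
      push_cast [hs]
      refine Finset.sum_congr rfl fun j _ => ?_
      rw [Complex.star_def]
      exact (Complex.mul_conj _).symm
    exact_mod_cast h3
  have hcol : ∀ j, ∑ i, s i j = 1 := by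
    intro j
    have h1 : star Wc * Wc = 1 := Matrix.UnitaryGroup.star_mul_self W
    have h2 := congrFun (congrFun h1 j) j
    simp only [Matrix.mul_apply, Matrix.star_apply, Matrix.one_apply_eq] at h2
    have h3 : (((∑ i, s i j : ℝ)) : ℂ) = 1 := by
      rw [← h2]
      push_cast [hs]
      refine Finset.sum_congr rfl fun i _ => ?_
      rw [Complex.star_def, mul_comm]
      exact (Complex.mul_conj _).symm
    exact_mod_cast h3
  -- the trace identity
  have hofReal : ((RCLike.ofReal : ℝ → ℂ)) = fun x : ℝ => (x : ℂ) := rfl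
  have hkey : A * B = (U : Matrix (Fin n) (Fin n) ℂ) *
      (Matrix.diagonal (fun i => (a i : ℂ)) * Wc * Matrix.diagonal (fun j => (b j : ℂ)) * star Wc)
      * star (U : Matrix (Fin n) (Fin n) ℂ) := by
    have hUu : (U : Matrix (Fin n) (Fin n) ℂ) * star (U : Matrix (Fin n) (Fin n) ℂ) = 1 :=
      Matrix.mem_unitaryGroup_iff.mp U.2
    have hAeq := hA.spectral_theorem
    have hBeq := hB.spectral_theorem
    have hWc' : Wc = star (U : Matrix (Fin n) (Fin n) ℂ) * (V : Matrix (Fin n) (Fin n) ℂ) := rfl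
    rw [hWc', Matrix.star_mul, star_star]
    conv_lhs => rw [hAeq, hBeq]
    simp only [Unitary.conjStarAlgAut_apply, Function.comp_def, hofReal]
    simp only [← ha, ← hb, ← hU, ← hV]
    simp only [Matrix.mul_assoc]
    rw [hUu, Matrix.mul_one]
  have htr : Matrix.trace (A * B) = ((∑ i, ∑ j, a i * b j * s i j : ℝ) : ℂ) := by
    rw [hkey, Matrix.trace_mul_comm, ← Matrix.mul_assoc,
      Matrix.UnitaryGroup.star_mul_self U, Matrix.one_mul]
    have hdiag : ∀ i, (Matrix.diagonal (fun i => (a i : ℂ)) * Wc *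
        Matrix.diagonal (fun j => (b j : ℂ)) * star Wc).diag i
        = ∑ j, ((a i * b j * s i j : ℝ) : ℂ) := by
      intro i
      simp only [Matrix.diag_apply]
      rw [Matrix.mul_apply]
      refine Finset.sum_congr rfl fun j _ => ?_
      rw [Matrix.mul_diagonal, Matrix.diagonal_mul, Matrix.star_apply, Complex.star_def]
      push_cast [hs]
      rw [show (a i : ℂ) * Wc i j * b j * (starRingEnd ℂ) (Wc i j)
          = (a i : ℂ) * b j * (Wc i j * (starRingEnd ℂ) (Wc i j)) from by ring]
      rw [Complex.mul_conj]
    rw [Matrix.trace, Finset.sum_congr rfl fun i _ => hdiag i]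
    norm_cast
  refine ⟨by rw [htr]; exact Complex.ofReal_im _, ?_⟩
  rw [htr, Complex.ofReal_re]
  -- now the real inequality
  have hp0 : p ≠ 0 := by positivity
  have hq0 : q ≠ 0 := by positivity
  set T : ℝ := ∑ i, ∑ j, a i * b j * s i j with hT
  have h1 : T = ∑ ij : Fin n × Fin n, a ij.1 * b ij.2 * s ij.1 ij.2 := by
    simp only [hT, Fintype.sum_prod_type]
  set f : Fin n × Fin n → ℝ := fun ij => s ij.1 ij.2 ^ (1/p) * |a ij.1| with hf
  set g : Fin n × Fin n → ℝ := fun ij => s ij.1 ij.2 ^ (1/q) * |b ij.2| with hg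
  have hfg : ∀ ij : Fin n × Fin n, a ij.1 * b ij.2 * s ij.1 ij.2 ≤ f ij * g ij := by
    intro ij
    have hss : s ij.1 ij.2 ^ (1/p) * s ij.1 ij.2 ^ (1/q) = s ij.1 ij.2 := by
      rw [← Real.rpow_add' (hs0 _ _) (by rw [hpq]; norm_num), hpq, Real.rpow_one]
    have hfg' : f ij * g ij = |a ij.1| * |b ij.2| * s ij.1 ij.2 := by
      simp only [hf, hg]
      rw [mul_mul_mul_comm, hss]
      ring
    rw [hfg']
    apply mul_le_mul_of_nonneg_right _ (hs0 _ _)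
    calc a ij.1 * b ij.2 ≤ |a ij.1 * b ij.2| := le_abs_self _
      _ = |a ij.1| * |b ij.2| := abs_mul _ _
  have hHolder : ∑ ij : Fin n × Fin n, f ij * g ij ≤
      (∑ ij : Fin n × Fin n, f ij ^ p) ^ (1/p) * (∑ ij : Fin n × Fin n, g ij ^ q) ^ (1/q) :=
    Real.inner_le_Lp_mul_Lq_of_nonneg Finset.univ hpq'
      (fun ij _ => mul_nonneg (Real.rpow_nonneg (hs0 _ _) _) (abs_nonneg _))
      (fun ij _ => mul_nonneg (Real.rpow_nonneg (hs0 _ _) _) (abs_nonneg _))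
  have hfp : ∑ ij : Fin n × Fin n, f ij ^ p = ∑ k, |a k| ^ p := by
    simp only [Fintype.sum_prod_type]
    calc ∑ i, ∑ j, f (i, j) ^ p = ∑ i, ∑ j, s i j * |a i| ^ p := by
          refine Finset.sum_congr rfl fun i _ => Finset.sum_congr rfl fun j _ => ?_
          rw [hf]
          simp only
          rw [Real.mul_rpow (Real.rpow_nonneg (hs0 _ _) _) (abs_nonneg _),
            ← Real.rpow_mul (hs0 _ _), one_div, inv_mul_cancel₀ hp0, Real.rpow_one]
      _ = ∑ i, |a i| ^ p := by
          refine Finset.sum_congr rfl fun i _ => ?_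
          rw [← Finset.sum_mul, hrow i, one_mul]
  have hgq : ∑ ij : Fin n × Fin n, g ij ^ q = ∑ k, |b k| ^ q := by
    simp only [Fintype.sum_prod_type]
    rw [Finset.sum_comm]
    calc ∑ j, ∑ i, g (i, j) ^ q = ∑ j, ∑ i, s i j * |b j| ^ q := by
          refine Finset.sum_congr rfl fun j _ => Finset.sum_congr rfl fun i _ => ?_
          rw [hg]
          simp only
          rw [Real.mul_rpow (Real.rpow_nonneg (hs0 _ _) _) (abs_nonneg _),
            ← Real.rpow_mul (hs0 _ _), one_div, inv_mul_cancel₀ hq0, Real.rpow_one]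
      _ = ∑ j, |b j| ^ q := by
          refine Finset.sum_congr rfl fun j _ => ?_
          rw [← Finset.sum_mul, hcol j, one_mul]
  calc T = ∑ ij : Fin n × Fin n, a ij.1 * b ij.2 * s ij.1 ij.2 := h1
    _ ≤ ∑ ij : Fin n × Fin n, f ij * g ij := Finset.sum_le_sum fun ij _ => hfg ij
    _ ≤ (∑ ij : Fin n × Fin n, f ij ^ p) ^ (1/p) * (∑ ij : Fin n × Fin n, g ij ^ q) ^ (1/q) := hHolder
    _ = (∑ k, |a k| ^ p) ^ (1/p) * (∑ k, |b k| ^ q) ^ (1/q) := by rw [hfp, hgq]
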